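/- For the charged three-body problem, the collinear central configuration condition on the reduced space reduces to the vanishing of the fifth degree polynomial f(u) = α₁ m₁ u²(1+u)²(m₂ + m₂u + m₃u) - α₂ m₂ (1+u)²(m₁ + m₃ + m₁u) - α₃ m₃ u²(m₂ - m₁u); i.e., positive reals x, y with y = ux, z = -(1+u)x, and λ ∈ ℝ satisfy the three central-configuration equations (eq. (14)) if and only if f(u) = 0. -/

import Mathlib

/-- The reduced polynomial for collinear central configurations of the charged
three-body problem. -/
noncomputable def chargedPoly (α₁ α₂ α₃ m₁ m₂ m₃ u : ℝ) : ℝ :=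
  α₁ * m₁ * u ^ 2 * (1 + u) ^ 2 * (m₂ + m₂ * u + m₃ * u)
    - α₂ * m₂ * (1 + u) ^ 2 * (m₁ + m₃ + m₁ * u)
    - α₃ * m₃ * u ^ 2 * (m₂ - m₁ * u)

set_option maxHeartbeats 1600000 in
/-- On the reduced space of collinear configurations (coordinates `y = u*x`,
`z = -(1+u)*x` with `x, y > 0`), the three central-configuration equations have a
common multiplier `λ` if and only if `f(u) = 0`. -/
theorem collinear_central_config_iff_poly
    (m₁ m₂ m₃ α₁ α₂ α₃ x u : ℝ)
    (hm₁ : 0 < m₁) (hm₂ : 0 < m₂) (hm₃ : 0 < m₃)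
    (hx : 0 < x) (hu : 0 < u)
    (y z : ℝ) (hy : y = u * x) (hz : z = -(1 + u) * x) :
    (∃ lam : ℝ,
      α₁ * (m₂ + m₃) / x ^ 2 - α₂ * m₂ / y ^ 2 + α₃ * m₃ / z ^ 2 = lam * m₂ * m₃ * x ∧
      α₂ * (m₁ + m₃) / y ^ 2 - α₁ * m₁ / x ^ 2 + α₃ * m₃ / z ^ 2 = lam * m₁ * m₃ * y ∧
      α₃ * (m₁ + m₂) / z ^ 2 + α₁ * m₁ / x ^ 2 + α₂ * m₂ / y ^ 2 = -(lam * m₁ * m₂ * z))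
    ↔ chargedPoly α₁ α₂ α₃ m₁ m₂ m₃ u = 0 := by
  subst hy hz
  have hx' : x ≠ 0 := hx.ne'
  have hu' : u ≠ 0 := hu.ne'
  have h1u : (1 : ℝ) + u ≠ 0 := by positivity
  unfold chargedPoly
  constructor
  · rintro ⟨lam, h1, h2, -⟩
    rw [show (-(1 + u) * x) ^ 2 = ((1 + u) * x) ^ 2 by ring] at h1 h2
    field_simp at h1 h2
    have key : (α₁ * m₁ * u ^ 2 * (1 + u) ^ 2 * (m₂ + m₂ * u + m₃ * u)
        - α₂ * m₂ * (1 + u) ^ 2 * (m₁ + m₃ + m₁ * u)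
        - α₃ * m₃ * u ^ 2 * (m₂ - m₁ * u)) * x ^ 4 = 0 := by
      linear_combination (m₁ * u * x ^ 4) * h1 - (m₂ * x ^ 4) * h2
    have hx4 : (x : ℝ) ^ 4 ≠ 0 := by positivity
    exact (mul_eq_zero.mp key).resolve_right hx4
  · intro hf
    refine ⟨(α₁ * (m₂ + m₃) / x ^ 2 - α₂ * m₂ / (u * x) ^ 2
        + α₃ * m₃ / ((1 + u) * x) ^ 2) / (m₂ * m₃ * x), ?_, ?_, ?_⟩ <;>
      rw [show (-(1 + u) * x) ^ 2 = ((1 + u) * x) ^ 2 by ring]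
    · field_simp
    · field_simp
      linear_combination (-1 : ℝ) * hf
    · field_simp
      linear_combination (-1 : ℝ) * hf
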